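/- Let $r, d_1, d_2, g, g'$ be independent random variables: $r$ with density $2\lambda_b e^{-2\lambda_b x}$ on $[0,\infty)$, $d_1, d_2$ exponential with rate $\lambda_v$, and $g, g'$ Gamma distributed with integer shape $n_0 \ge 1$ and rate $1$. Define the SNR random variable $S$ by: $S = g\, u_m v_m \ell_{ub}(r)/\sigma^2$ if $d_1 \ge r h_v/h_b$; otherwise $S = g'\, u_m v_m \ell_r(r, r_s)/\sigma^2$ if either ($r \le r_s$ and $d_2 \ge (r_s - r) h_v/h_s$) or ($r > r_s$ and $d_1 \ge (r - r_s) h_v/h_s$); otherwise $S = 0$. Then for every $\gamma > 0$, $\mathbb{P}(S > \gamma) = \int_0^\infty \Big[ e^{-T_1 x}\, F_{n_0}\!\Big(\frac{\gamma \sigma^2}{u_m v_m \ell_{ub}(x)}\Big) + \big(p_D(x) - J(x, r_s)\big)\, F_{n_0}\!\Big(\frac{\gamma \sigma^2}{u_m v_m \ell_r(x, r_s)}\Big) \Big] 2\lambda_b e^{-2\lambda_b x}\, dx$, where $p_D(x) = 1 - e^{-T_1 x}$, $J(x, r_s) = (1 - e^{-T_1 x})(1 - e^{-T_2(r_s - x)})$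 for $x \le r_s$ and $J(x, r_s) = 1 - e^{-T_2(x - r_s)}$ for $x > r_s$, and $F_{n_0}(y) = e^{-y} \sum_{q=0}^{n_0 - 1} y^q/q!$. -/

import Mathlib

open MeasureTheory ProbabilityTheory Real Set

namespace SNRAux

open Filter

lemma integrableOn_pow_mul_exp (n : ℕ) {t : ℝ} (ht : 0 ≤ t) :
    IntegrableOn (fun x : ℝ => x ^ n * Real.exp (-x)) (Ioi t) := by
  have h0 : IntegrableOn (fun x : ℝ => x ^ n * Real.exp (-x)) (Ioi 0) := by
    have h := Real.GammaIntegral_convergent (s := (n : ℝ) + 1) (by positivity)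
    refine (h.congr_fun (fun x hx => ?_) measurableSet_Ioi)
    beta_reduce
    rw [add_sub_cancel_right, Real.rpow_natCast, mul_comm]
  exact h0.mono_set (Ioi_subset_Ioi ht)

lemma hasDerivAt_F (n : ℕ) (x : ℝ) :
    HasDerivAt (fun y : ℝ => -(Real.exp (-y) *
        ∑ q ∈ Finset.range (n+1), ((n.factorial : ℝ) / (q.factorial : ℝ)) * y ^ q))
      (x ^ n * Real.exp (-x)) x := by
  have hE : HasDerivAt (fun y : ℝ => Real.exp (-y)) (Real.exp (-x) * (-1)) x :=
    (hasDerivAt_neg' x).exp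
  have hP : HasDerivAt (fun y : ℝ => ∑ q ∈ Finset.range (n+1),
        ((n.factorial : ℝ) / (q.factorial : ℝ)) * y ^ q)
      (∑ q ∈ Finset.range n, ((n.factorial : ℝ) / (q.factorial : ℝ)) * x ^ q) x := by
    have h : HasDerivAt (fun y : ℝ => ∑ q ∈ Finset.range (n+1),
          ((n.factorial : ℝ) / (q.factorial : ℝ)) * y ^ q)
        (∑ q ∈ Finset.range (n+1),
          ((n.factorial : ℝ) / (q.factorial : ℝ)) * ((q : ℝ) * x ^ (q-1))) x := by
      apply HasDerivAt.fun_sum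
      intro q _
      exact (hasDerivAt_pow q x).const_mul _
    convert h using 1
    rw [Finset.sum_range_succ' (fun q => ((n.factorial : ℝ) / (q.factorial : ℝ)) * ((q : ℝ) * x ^ (q-1)))]
    simp only [Nat.cast_zero, zero_mul, mul_zero, add_zero, Nat.add_sub_cancel]
    refine Finset.sum_congr rfl (fun q _ => ?_)
    have hq : ((q+1).factorial : ℝ) = (q+1) * q.factorial := by
      rw [Nat.factorial_succ]; push_cast; ring
    rw [hq]
    have h1 : (q.factorial : ℝ) ≠ 0 := Nat.cast_ne_zero.mpr q.factorial_ne_zero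
    have h2 : ((q:ℝ)+1) ≠ 0 := by positivity
    field_simp
    push_cast
    ring
  have := (hE.mul hP).neg
  refine this.congr_deriv ?_
  rw [Finset.sum_range_succ]
  have h1 : ((n.factorial : ℝ) / (n.factorial : ℝ)) = 1 :=
    div_self (Nat.cast_ne_zero.mpr n.factorial_ne_zero)
  rw [h1]
  ring

lemma tendsto_F (n : ℕ) :
    Tendsto (fun y : ℝ => -(Real.exp (-y) *
        ∑ q ∈ Finset.range (n+1), ((n.factorial : ℝ) / (q.factorial : ℝ)) * y ^ q))
      atTop (nhds 0) := by
  have h : Tendsto (fun y : ℝ => Real.exp (-y) *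
        ∑ q ∈ Finset.range (n+1), ((n.factorial : ℝ) / (q.factorial : ℝ)) * y ^ q)
      atTop (nhds 0) := by
    have heq : ∀ y : ℝ, Real.exp (-y) * ∑ q ∈ Finset.range (n+1),
          ((n.factorial : ℝ) / (q.factorial : ℝ)) * y ^ q
        = ∑ q ∈ Finset.range (n+1),
          ((n.factorial : ℝ) / (q.factorial : ℝ)) * (y ^ q * Real.exp (-y)) := by
      intro y
      rw [Finset.mul_sum]
      exact Finset.sum_congr rfl (fun q _ => by ring)
    simp only [heq]
    have : (0:ℝ) = ∑ q ∈ Finset.range (n+1), ((n.factorial : ℝ) / (q.factorial : ℝ)) * 0 := by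
      simp
    rw [this]
    exact tendsto_finset_sum _ (fun q _ =>
      (Real.tendsto_pow_mul_exp_neg_atTop_nhds_zero q).const_mul _)
  simpa using h.neg

lemma integral_pow_mul_exp_neg_Ioi (n : ℕ) {t : ℝ} (ht : 0 ≤ t) :
    ∫ x in Ioi t, x ^ n * Real.exp (-x)
      = Real.exp (-t) * ∑ q ∈ Finset.range (n+1), ((n.factorial : ℝ) / (q.factorial : ℝ)) * t ^ q := by
  rw [integral_Ioi_of_hasDerivAt_of_tendsto' (fun x _ => hasDerivAt_F n x)
    (integrableOn_pow_mul_exp n ht) (tendsto_F n)]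
  ring

lemma gamma_tail {n : ℕ} (hn : 1 ≤ n) {t : ℝ} (ht : 0 ≤ t) :
    gammaMeasure (n : ℝ) 1 (Ioi t)
      = ENNReal.ofReal (Real.exp (-t) * ∑ q ∈ Finset.range n, t ^ q / (q.factorial : ℝ)) := by
  obtain ⟨m, rfl⟩ : ∃ m, n = m + 1 := ⟨n - 1, (Nat.succ_pred_eq_of_pos hn).symm⟩
  rw [gammaMeasure, withDensity_apply _ measurableSet_Ioi]
  have hpdf : ∀ x ∈ Ioi t, gammaPDF ((m+1 : ℕ) : ℝ) 1 x
      = ENNReal.ofReal ((1/(m.factorial:ℝ)) * (x ^ m * Real.exp (-x))) := by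
    intro x hx
    have hx0 : (0:ℝ) ≤ x := le_of_lt (lt_of_le_of_lt ht hx)
    rw [gammaPDF_of_nonneg hx0]
    congr 1
    rw [Real.one_rpow, show ((m+1:ℕ):ℝ) - 1 = ((m:ℕ):ℝ) by push_cast; ring,
      Real.rpow_natCast, show ((m+1:ℕ):ℝ) = (m:ℝ) + 1 by push_cast; ring,
      Real.Gamma_nat_eq_factorial, one_mul]
    ring
  rw [setLIntegral_congr_fun measurableSet_Ioi hpdf,
    ← ofReal_integral_eq_lintegral_ofReal
      ((integrableOn_pow_mul_exp m ht).const_mul _)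
      ((ae_restrict_iff' measurableSet_Ioi).mpr (ae_of_all _ (fun x hx => by
        have hx0 : (0:ℝ) ≤ x := le_of_lt (lt_of_le_of_lt ht hx)
        have h1 : (0:ℝ) ≤ x ^ m * Real.exp (-x) := by positivity
        positivity)))]
  congr 1
  rw [MeasureTheory.integral_const_mul, integral_pow_mul_exp_neg_Ioi m ht]
  have hm : (m.factorial : ℝ) ≠ 0 := Nat.cast_ne_zero.mpr m.factorial_ne_zero
  rw [show (1/(m.factorial:ℝ)) * (Real.exp (-t) * ∑ q ∈ Finset.range (m+1),
        ((m.factorial : ℝ) / (q.factorial : ℝ)) * t ^ q)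
      = Real.exp (-t) * ((1/(m.factorial:ℝ)) * ∑ q ∈ Finset.range (m+1),
        ((m.factorial : ℝ) / (q.factorial : ℝ)) * t ^ q) from by ring]
  congr 1
  rw [Finset.mul_sum]
  refine Finset.sum_congr rfl (fun q _ => ?_)
  have hq : (q.factorial : ℝ) ≠ 0 := Nat.cast_ne_zero.mpr q.factorial_ne_zero
  field_simp

lemma exp_tail {r a : ℝ} (hr : 0 < r) (ha : 0 ≤ a) :
    expMeasure r (Ici a) = ENNReal.ofReal (Real.exp (-(r*a))) := by
  rw [expMeasure, gammaMeasure, withDensity_apply _ measurableSet_Ici]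
  have hpdf : ∀ x ∈ Ici a, gammaPDF 1 r x = ENNReal.ofReal (r * Real.exp (-(r*x))) := by
    intro x hx
    rw [show gammaPDF 1 r x = exponentialPDF r x from rfl, exponentialPDF_of_nonneg (ha.trans hx)]
  have hint : IntegrableOn (fun x : ℝ => r * Real.exp (-(r*x))) (Ici a) := by
    rw [integrableOn_Ici_iff_integrableOn_Ioi]
    exact ((exp_neg_integrableOn_Ioi a hr).congr_fun (fun x _ => by rw [neg_mul])
      measurableSet_Ioi).const_mul r
  rw [setLIntegral_congr_fun measurableSet_Ici hpdf,
    ← ofReal_integral_eq_lintegral_ofReal hint (ae_of_all _ (fun x => by positivity))]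
  congr 1
  rw [MeasureTheory.integral_Ici_eq_integral_Ioi]
  have htend : Tendsto (fun x : ℝ => -Real.exp (-(r*x))) atTop (nhds 0) := by
    have h1 : Tendsto (fun x : ℝ => r * x) atTop atTop := tendsto_id.const_mul_atTop hr
    have := (Real.tendsto_exp_neg_atTop_nhds_zero.comp h1).neg
    simpa using this
  have := integral_Ioi_of_hasDerivAt_of_tendsto' (a := a)
    (f := fun x => -Real.exp (-(r*x))) (f' := fun x => r * Real.exp (-(r*x)))
    (fun x _ => hasDerivAt_neg_exp_mul_exp)
    (hint.mono_set Ioi_subset_Ici_self) htend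
  rw [this]
  ring

lemma exp_Iio {r a : ℝ} (hr : 0 < r) (ha : 0 ≤ a) :
    expMeasure r (Iio a) = ENNReal.ofReal (1 - Real.exp (-(r*a))) := by
  haveI := isProbabilityMeasure_expMeasure hr
  rw [show Iio a = (Ici a)ᶜ from compl_Ici.symm,
    measure_compl measurableSet_Ici (measure_ne_top _ _), measure_univ, exp_tail hr ha,
    ← ENNReal.ofReal_one, ← ENNReal.ofReal_sub _ (Real.exp_nonneg _)]

lemma exp_Ico {r c a : ℝ} (hr : 0 < r) (hc : 0 ≤ c) (hca : c ≤ a) :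
    expMeasure r (Ico c a) = ENNReal.ofReal (Real.exp (-(r*c)) - Real.exp (-(r*a))) := by
  haveI := isProbabilityMeasure_expMeasure hr
  rw [show Ico c a = Ici c \ Ici a from by rw [Ici_diff_Ici],
    measure_diff (Ici_subset_Ici.mpr hca) measurableSet_Ici.nullMeasurableSet (measure_ne_top _ _),
    exp_tail hr hc, exp_tail hr (hc.trans hca),
    ← ENNReal.ofReal_sub _ (Real.exp_nonneg _)]

end SNRAux

open SNRAux

set_option maxHeartbeats 2000000 in
/-- **Theorem 1 (SNR coverage probability, fixed-distance RIS deployment).**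
The probability space is `(r, d₁, d₂, g, g')` with `r` exponential of rate `2λb`,
`d₁, d₂` exponential of rate `λv`, and `g, g'` Gamma of integer shape `n₀` and rate `1`,
all independent.  The SNR `S` equals the direct-link SNR when the direct link is LOS,
the via-RIS SNR when the direct link is blocked but the RIS link is LOS, and `0`
otherwise.  Then `ℙ(S > γ)` equals the stated integral. -/
theorem snr_coverage_probability
    (lb lv hv hb hs rs K α um vm σ2 γ : ℝ) (n0 N : ℕ)
    (hlb : 0 < lb) (hlv : 0 < lv) (hhv : 0 < hv) (hvb : hv < hb) (hbs : hb < hs)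
    (hrs : 0 ≤ rs) (hK : 0 < K) (hα : 0 < α) (hum : 0 < um) (hvm : 0 < vm)
    (hσ : 0 < σ2) (hγ : 0 < γ) (hn0 : 1 ≤ n0) (hN : 2 ≤ N)
    (T1 T2 : ℝ) (hT1 : T1 = lv * hv / hb) (hT2 : T2 = lv * hv / hs)
    (ℓub ℓr : ℝ → ℝ) (pD J : ℝ → ℝ) (Fc : ℝ → ℝ)
    (hℓub : ∀ x, ℓub x = K * (Real.sqrt (x ^ 2 + hb ^ 2)) ^ (-α))
    (hℓr : ∀ x, ℓr x = Real.pi * ((N : ℝ) - 1) ^ 2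
      * (K * (Real.sqrt (rs ^ 2 + (hs - hb) ^ 2)) ^ (-α))
      * (K * (Real.sqrt (|x - rs| ^ 2 + hs ^ 2)) ^ (-α)))
    (hpD : ∀ x, pD x = 1 - exp (-T1 * x))
    (hJ : ∀ x, J x = if x ≤ rs then (1 - exp (-T1 * x)) * (1 - exp (-T2 * (rs - x)))
      else 1 - exp (-T2 * (x - rs)))
    (hFc : ∀ y, Fc y = exp (-y) * ∑ q ∈ Finset.range n0, y ^ q / (q.factorial : ℝ))
    (μ : Measure (ℝ × ℝ × ℝ × ℝ × ℝ))
    (hμ : μ = (expMeasure (2 * lb)).prod ((expMeasure lv).prod ((expMeasure lv).prod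
      ((gammaMeasure (n0 : ℝ) 1).prod (gammaMeasure (n0 : ℝ) 1)))))
    (S : ℝ × ℝ × ℝ × ℝ × ℝ → ℝ)
    (hS : ∀ ω : ℝ × ℝ × ℝ × ℝ × ℝ,
      S ω = if ω.2.1 ≥ ω.1 * hv / hb then ω.2.2.2.1 * um * vm * ℓub ω.1 / σ2
        else if (ω.1 ≤ rs ∧ ω.2.2.1 ≥ (rs - ω.1) * hv / hs)
            ∨ (rs < ω.1 ∧ ω.2.1 ≥ (ω.1 - rs) * hv / hs)
          then ω.2.2.2.2 * um * vm * ℓr ω.1 / σ2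
        else 0) :
    μ {ω | S ω > γ} = ENNReal.ofReal (∫ x in Set.Ioi (0:ℝ),
      (exp (-T1 * x) * Fc (γ * σ2 / (um * vm * ℓub x))
        + (pD x - J x) * Fc (γ * σ2 / (um * vm * ℓr x)))
      * (2 * lb * exp (-2 * lb * x))) := by
  -- basic positivity facts
  have hb0 : 0 < hb := hhv.trans hvb
  have hs0 : 0 < hs := hb0.trans hbs
  have hT1p : 0 < T1 := by rw [hT1]; positivity
  have hT2p : 0 < T2 := by rw [hT2]; positivity
  have hn0R : (0:ℝ) < (n0:ℝ) := by
    have h : 0 < n0 := hn0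
    exact_mod_cast h
  have hℓub_pos : ∀ x : ℝ, 0 < ℓub x := fun x => by
    rw [hℓub]
    have h1 : 0 < Real.sqrt (x ^ 2 + hb ^ 2) :=
      Real.sqrt_pos.mpr (lt_of_lt_of_le (pow_pos hb0 2) (le_add_of_nonneg_left (sq_nonneg x)))
    exact mul_pos hK (Real.rpow_pos_of_pos h1 _)
  have hℓr_pos : ∀ x : ℝ, 0 < ℓr x := fun x => by
    rw [hℓr]
    have h1 : 0 < Real.sqrt (rs ^ 2 + (hs - hb) ^ 2) :=
      Real.sqrt_pos.mpr (lt_of_lt_of_le (pow_pos (sub_pos.mpr hbs) 2)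
        (le_add_of_nonneg_left (sq_nonneg rs)))
    have h2 : 0 < Real.sqrt (|x - rs| ^ 2 + hs ^ 2) :=
      Real.sqrt_pos.mpr (lt_of_lt_of_le (pow_pos hs0 2)
        (le_add_of_nonneg_left (sq_nonneg _)))
    have h3 : (0:ℝ) < ((N:ℝ) - 1) ^ 2 := by
      have h4 : (2:ℝ) ≤ (N:ℝ) := by exact_mod_cast hN
      nlinarith
    exact mul_pos (mul_pos (mul_pos Real.pi_pos h3)
      (mul_pos hK (Real.rpow_pos_of_pos h1 _))) (mul_pos hK (Real.rpow_pos_of_pos h2 _))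
  have hM1 : ∀ x : ℝ, 0 < um * vm * ℓub x := fun x =>
    mul_pos (mul_pos hum hvm) (hℓub_pos x)
  have hM2 : ∀ x : ℝ, 0 < um * vm * ℓr x := fun x =>
    mul_pos (mul_pos hum hvm) (hℓr_pos x)
  have ht1nn : ∀ x : ℝ, 0 ≤ γ * σ2 / (um * vm * ℓub x) := fun x =>
    (div_pos (by positivity) (hM1 x)).le
  have ht2nn : ∀ x : ℝ, 0 ≤ γ * σ2 / (um * vm * ℓr x) := fun x =>
    (div_pos (by positivity) (hM2 x)).le
  -- measurability
  have hℓubm : Measurable ℓub := by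
    have h : ℓub = fun x => K * (Real.sqrt (x ^ 2 + hb ^ 2)) ^ (-α) := funext hℓub
    rw [h]; fun_prop
  have hℓrm : Measurable ℓr := by
    have h : ℓr = fun x => Real.pi * ((N : ℝ) - 1) ^ 2
        * (K * (Real.sqrt (rs ^ 2 + (hs - hb) ^ 2)) ^ (-α))
        * (K * (Real.sqrt (|x - rs| ^ 2 + hs ^ 2)) ^ (-α)) := funext hℓr
    rw [h]; fun_prop
  have hFcm : Measurable Fc := by
    have h : Fc = fun y => Real.exp (-y) * ∑ q ∈ Finset.range n0, y ^ q / (q.factorial : ℝ) :=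
      funext hFc
    rw [h]
    exact (measurable_id.neg.exp).mul (Finset.measurable_sum _ (fun q _ =>
      (measurable_id.pow_const q).div_const _))
  have hpDm : Measurable pD := by
    have h : pD = fun x => 1 - Real.exp (-T1 * x) := funext hpD
    rw [h]; fun_prop
  have hJm : Measurable J := by
    have h : J = fun x => if x ≤ rs then (1 - Real.exp (-T1 * x)) * (1 - Real.exp (-T2 * (rs - x)))
        else 1 - Real.exp (-T2 * (x - rs)) := funext hJ
    rw [h]
    exact Measurable.ite measurableSet_Iic (by fun_prop) (by fun_prop)
  have hSm : Measurable S := by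
    have h : S = fun ω : ℝ × ℝ × ℝ × ℝ × ℝ =>
        if ω.2.1 ≥ ω.1 * hv / hb then ω.2.2.2.1 * um * vm * ℓub ω.1 / σ2
          else if (ω.1 ≤ rs ∧ ω.2.2.1 ≥ (rs - ω.1) * hv / hs)
              ∨ (rs < ω.1 ∧ ω.2.1 ≥ (ω.1 - rs) * hv / hs)
            then ω.2.2.2.2 * um * vm * ℓr ω.1 / σ2
          else 0 := funext hS
    rw [h]
    have m1 : MeasurableSet {ω : ℝ × ℝ × ℝ × ℝ × ℝ | ω.2.1 ≥ ω.1 * hv / hb} :=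
      measurableSet_le (by fun_prop) (by fun_prop)
    have m2 : MeasurableSet {ω : ℝ × ℝ × ℝ × ℝ × ℝ |
        (ω.1 ≤ rs ∧ ω.2.2.1 ≥ (rs - ω.1) * hv / hs)
          ∨ (rs < ω.1 ∧ ω.2.1 ≥ (ω.1 - rs) * hv / hs)} := by
      rw [Set.setOf_or, Set.setOf_and, Set.setOf_and]
      exact ((measurableSet_le (by fun_prop) (by fun_prop)).inter
          (measurableSet_le (by fun_prop) (by fun_prop))).union
        ((measurableSet_lt (by fun_prop) (by fun_prop)).inter
          (measurableSet_le (by fun_prop) (by fun_prop)))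
    exact Measurable.ite m1 (by fun_prop) (Measurable.ite m2 (by fun_prop) measurable_const)
  -- probability measure instances
  haveI i1 : IsProbabilityMeasure (expMeasure (2 * lb)) :=
    isProbabilityMeasure_expMeasure (by positivity)
  haveI i2 : IsProbabilityMeasure (expMeasure lv) := isProbabilityMeasure_expMeasure hlv
  haveI i3 : IsProbabilityMeasure (gammaMeasure (n0:ℝ) 1) :=
    isProbabilityMeasure_gammaMeasure hn0R one_pos
  set ν : Measure (ℝ × ℝ × ℝ × ℝ) := (expMeasure lv).prod ((expMeasure lv).prod
      ((gammaMeasure (n0 : ℝ) 1).prod (gammaMeasure (n0 : ℝ) 1))) with hνdef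
  haveI iν : IsProbabilityMeasure ν := by rw [hνdef]; infer_instance
  set A : Set (ℝ × ℝ × ℝ × ℝ × ℝ) := {ω | S ω > γ} with hAdef
  have hA : MeasurableSet A := hSm measurableSet_Ioi
  -- Fc bounds
  have hFc0 : ∀ y : ℝ, 0 ≤ y → 0 ≤ Fc y := fun y hy => by
    rw [hFc]
    exact mul_nonneg (Real.exp_nonneg _) (Finset.sum_nonneg fun q _ =>
      div_nonneg (pow_nonneg hy q) (Nat.cast_nonneg _))
  have hFc1 : ∀ y : ℝ, 0 ≤ y → Fc y ≤ 1 := fun y hy => by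
    rw [hFc]
    calc Real.exp (-y) * ∑ q ∈ Finset.range n0, y ^ q / (q.factorial : ℝ)
        ≤ Real.exp (-y) * Real.exp y :=
          mul_le_mul_of_nonneg_left (Real.sum_le_exp_of_nonneg hy n0) (Real.exp_nonneg _)
      _ = 1 := by rw [← Real.exp_add]; simp
  -- pD - J bounds
  have hpDJ : ∀ x : ℝ, 0 < x → 0 ≤ pD x - J x ∧ pD x - J x ≤ 1 := by
    intro x hx
    rw [hpD, hJ]
    have hA1 : Real.exp (-T1 * x) ≤ 1 := Real.exp_le_one_iff.mpr (by nlinarith)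
    have hA0 : 0 < Real.exp (-T1 * x) := Real.exp_pos _
    split_ifs with h
    · have hB1 : Real.exp (-T2 * (rs - x)) ≤ 1 := Real.exp_le_one_iff.mpr (by nlinarith)
      have hB0 : 0 < Real.exp (-T2 * (rs - x)) := Real.exp_pos _
      constructor <;> nlinarith
    · have hx' : rs < x := not_le.mp h
      have hB1 : Real.exp (-T2 * (x - rs)) ≤ 1 := Real.exp_le_one_iff.mpr (by nlinarith)
      have hB0 : 0 < Real.exp (-T2 * (x - rs)) := Real.exp_pos _
      have hT21 : T2 ≤ T1 := by
        rw [hT1, hT2]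
        gcongr
      have hmono : Real.exp (-T1 * x) ≤ Real.exp (-T2 * (x - rs)) := by
        apply Real.exp_le_exp.mpr
        nlinarith
      constructor <;> nlinarith
  -- the slice computation
  have key : ∀ x : ℝ, 0 < x →
      ν (Prod.mk x ⁻¹' A) = ENNReal.ofReal
        (Real.exp (-T1 * x) * Fc (γ * σ2 / (um * vm * ℓub x))
          + (pD x - J x) * Fc (γ * σ2 / (um * vm * ℓr x))) := by
    intro x hx
    have hA' : Prod.mk x ⁻¹' A = {p : ℝ × ℝ × ℝ × ℝ | γ < S (x, p)} := rfl
    set a := x * hv / hb with hadef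
    have ha0 : 0 ≤ a := by positivity
    set t1 := γ * σ2 / (um * vm * ℓub x) with ht1def
    set t2 := γ * σ2 / (um * vm * ℓr x) with ht2def
    have ht1 : 0 ≤ t1 := ht1nn x
    have ht2 : 0 ≤ t2 := ht2nn x
    have hsum1 : 0 ≤ ∑ q ∈ Finset.range n0, t1 ^ q / (q.factorial : ℝ) :=
      Finset.sum_nonneg fun q _ => div_nonneg (pow_nonneg ht1 q) (Nat.cast_nonneg _)
    have hsum2 : 0 ≤ ∑ q ∈ Finset.range n0, t2 ^ q / (q.factorial : ℝ) :=
      Finset.sum_nonneg fun q _ => div_nonneg (pow_nonneg ht2 q) (Nat.cast_nonneg _)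
    have hgiff1 : ∀ g : ℝ, (γ < g * um * vm * ℓub x / σ2) ↔ t1 < g := fun g => by
      rw [lt_div_iff₀ hσ, show g * um * vm * ℓub x = g * (um * vm * ℓub x) from by ring, ht1def]
      exact (div_lt_iff₀ (hM1 x)).symm
    have hgiff2 : ∀ g : ℝ, (γ < g * um * vm * ℓr x / σ2) ↔ t2 < g := fun g => by
      rw [lt_div_iff₀ hσ, show g * um * vm * ℓr x = g * (um * vm * ℓr x) from by ring, ht2def]
      exact (div_lt_iff₀ (hM2 x)).symm
    have hexp1 : -(lv * a) = -T1 * x := by rw [hadef, hT1]; ring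
    rcases le_or_gt x rs with hxr | hxr
    · -- case x ≤ rs
      set b := (rs - x) * hv / hs with hbdef
      have hb0' : 0 ≤ b := div_nonneg (mul_nonneg (by linarith) hhv.le) hs0.le
      have hexp2 : -(lv * b) = -T2 * (rs - x) := by rw [hbdef, hT2]; ring
      have hset : {p : ℝ × ℝ × ℝ × ℝ | γ < S (x, p)} =
          (Ici a ×ˢ ((univ : Set ℝ) ×ˢ (Ioi t1 ×ˢ (univ : Set ℝ)))) ∪
          (Iio a ×ˢ (Ici b ×ˢ ((univ : Set ℝ) ×ˢ Ioi t2))) := by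
        ext p
        simp only [mem_setOf_eq, hS, mem_union, mem_prod, mem_Ici, mem_Iio, mem_Ioi,
          mem_univ, and_true, true_and, ge_iff_le]
        split_ifs with h1 h2
        · rw [hgiff1]
          have h1' : ¬ p.1 < a := not_lt.mpr h1
          tauto
        · rw [hgiff2]
          have h1' : p.1 < a := lt_of_not_ge h1
          have h2' : b ≤ p.2.1 := by
            rcases h2 with ⟨_, h⟩ | ⟨h, _⟩
            · exact h
            · exact absurd h (not_lt.mpr hxr)
          tauto
        · have hng : ¬ γ < 0 := not_lt.mpr hγ.le
          have h1' : p.1 < a := lt_of_not_ge h1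
          constructor
          · intro h; exact absurd h hng
          · rintro (⟨hc, _⟩ | ⟨_, hc, _⟩)
            · exact absurd hc (not_le.mpr h1')
            · exact absurd (Or.inl ⟨hxr, hc⟩) h2
      have hdisj : Disjoint (Ici a ×ˢ ((univ : Set ℝ) ×ˢ (Ioi t1 ×ˢ (univ : Set ℝ))))
          (Iio a ×ˢ (Ici b ×ˢ ((univ : Set ℝ) ×ˢ Ioi t2))) := by
        apply Set.disjoint_left.mpr
        rintro p ⟨h1, -⟩ ⟨h2, -⟩
        exact not_le.mpr (mem_Iio.mp h2) (mem_Ici.mp h1)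
      have hm2 : MeasurableSet (Iio a ×ˢ (Ici b ×ˢ ((univ : Set ℝ) ×ˢ Ioi t2))) :=
        measurableSet_Iio.prod (measurableSet_Ici.prod (MeasurableSet.univ.prod measurableSet_Ioi))
      rw [hA', hset, measure_union hdisj hm2, hνdef]
      simp only [Measure.prod_prod, measure_univ, mul_one, one_mul]
      rw [exp_tail hlv ha0, exp_Iio hlv ha0, exp_tail hlv hb0',
        gamma_tail hn0 ht1, gamma_tail hn0 ht2]
      have hend1 : 0 ≤ 1 - Real.exp (-(lv * a)) :=
        sub_nonneg.mpr (Real.exp_le_one_iff.mpr (neg_nonpos.mpr (by positivity)))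
      rw [← ENNReal.ofReal_mul (Real.exp_nonneg (-(lv * a))),
        ← ENNReal.ofReal_mul (Real.exp_nonneg (-(lv * b))),
        ← ENNReal.ofReal_mul hend1,
        ← ENNReal.ofReal_add
          (mul_nonneg (Real.exp_nonneg _) (mul_nonneg (Real.exp_nonneg _) hsum1))
          (mul_nonneg hend1 (mul_nonneg (Real.exp_nonneg _)
            (mul_nonneg (Real.exp_nonneg _) hsum2)))]
      congr 1
      rw [hexp1, hexp2, hFc, hFc, hpD, hJ, if_pos hxr]
      ring
    · -- case rs < x
      set c := (x - rs) * hv / hs with hcdef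
      have hc0 : 0 ≤ c := div_nonneg (mul_nonneg (by linarith) hhv.le) hs0.le
      have hca : c ≤ a := by
        rw [hcdef, hadef]
        apply div_le_div₀ (by positivity) (by nlinarith) hb0 hbs.le
      have hexp3 : -(lv * c) = -T2 * (x - rs) := by rw [hcdef, hT2]; ring
      have hset : {p : ℝ × ℝ × ℝ × ℝ | γ < S (x, p)} =
          (Ici a ×ˢ ((univ : Set ℝ) ×ˢ (Ioi t1 ×ˢ (univ : Set ℝ)))) ∪
          (Ico c a ×ˢ ((univ : Set ℝ) ×ˢ ((univ : Set ℝ) ×ˢ Ioi t2))) := by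
        ext p
        simp only [mem_setOf_eq, hS, mem_union, mem_prod, mem_Ici, mem_Ico, mem_Ioi,
          mem_univ, and_true, true_and, ge_iff_le]
        split_ifs with h1 h2
        · rw [hgiff1]
          have h1' : ¬ p.1 < a := not_lt.mpr h1
          tauto
        · rw [hgiff2]
          have h1' : p.1 < a := lt_of_not_ge h1
          have h2' : c ≤ p.1 := by
            rcases h2 with ⟨h, _⟩ | ⟨_, h⟩
            · exact absurd h (not_le.mpr hxr)
            · exact h
          tauto
        · have hng : ¬ γ < 0 := not_lt.mpr hγ.le
          have h1' : p.1 < a := lt_of_not_ge h1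
          constructor
          · intro h; exact absurd h hng
          · rintro (⟨hc1, _⟩ | ⟨⟨hc1, _⟩, _⟩)
            · exact absurd hc1 (not_le.mpr h1')
            · exact absurd (Or.inr ⟨hxr, hc1⟩) h2
      have hdisj : Disjoint (Ici a ×ˢ ((univ : Set ℝ) ×ˢ (Ioi t1 ×ˢ (univ : Set ℝ))))
          (Ico c a ×ˢ ((univ : Set ℝ) ×ˢ ((univ : Set ℝ) ×ˢ Ioi t2))) := by
        apply Set.disjoint_left.mpr
        rintro p ⟨h1, -⟩ ⟨⟨-, h2⟩, -⟩
        exact not_le.mpr h2 h1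
      have hm2 : MeasurableSet (Ico c a ×ˢ ((univ : Set ℝ) ×ˢ ((univ : Set ℝ) ×ˢ Ioi t2))) :=
        measurableSet_Ico.prod (MeasurableSet.univ.prod (MeasurableSet.univ.prod measurableSet_Ioi))
      rw [hA', hset, measure_union hdisj hm2, hνdef]
      simp only [Measure.prod_prod, measure_univ, mul_one, one_mul]
      rw [exp_tail hlv ha0, exp_Ico hlv hc0 hca, gamma_tail hn0 ht1, gamma_tail hn0 ht2]
      have hsub : 0 ≤ Real.exp (-(lv * c)) - Real.exp (-(lv * a)) := by
        apply sub_nonneg.mpr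
        apply Real.exp_le_exp.mpr
        have := mul_le_mul_of_nonneg_left hca hlv.le
        linarith
      rw [← ENNReal.ofReal_mul (Real.exp_nonneg (-(lv * a))),
        ← ENNReal.ofReal_mul hsub,
        ← ENNReal.ofReal_add
          (mul_nonneg (Real.exp_nonneg _) (mul_nonneg (Real.exp_nonneg _) hsum1))
          (mul_nonneg hsub (mul_nonneg (Real.exp_nonneg _) hsum2))]
      congr 1
      rw [hexp1, hexp3, hFc, hFc, hpD, hJ, if_neg (not_le.mpr hxr)]
      ring
  -- the main chain
  have hpdfm : Measurable (exponentialPDF (2 * lb)) :=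
    (measurable_gammaPDFReal 1 (2 * lb)).ennreal_ofReal
  have hfm : Measurable fun x => ν (Prod.mk x ⁻¹' A) := measurable_measure_prodMk_left hA
  rw [hμ, Measure.prod_apply hA,
    show expMeasure (2 * lb) = volume.withDensity (exponentialPDF (2 * lb)) from rfl,
    lintegral_withDensity_eq_lintegral_mul volume hpdfm hfm,
    ← lintegral_add_compl (μ := volume)
      ((exponentialPDF (2 * lb)) * fun x => ν (Prod.mk x ⁻¹' A)) measurableSet_Ioi
      (A := Ioi (0:ℝ))]
  have hcompl : ∫⁻ x in (Ioi (0:ℝ))ᶜ,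
      ((exponentialPDF (2 * lb)) * fun x => ν (Prod.mk x ⁻¹' A)) x = 0 := by
    rw [compl_Ioi, ← setLIntegral_congr Iio_ae_eq_Iic,
      setLIntegral_congr_fun measurableSet_Iio (fun ⦃x⦄ (hx : x < 0) => ?_),
      lintegral_zero]
    show (exponentialPDF (2 * lb)) x * ν (Prod.mk x ⁻¹' A) = 0
    rw [exponentialPDF_of_neg hx, zero_mul]
  rw [hcompl, add_zero]
  have hptwise : ∀ x : ℝ, x ∈ Ioi (0:ℝ) →
      ((exponentialPDF (2 * lb)) * fun x => ν (Prod.mk x ⁻¹' A)) x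
      = ENNReal.ofReal ((Real.exp (-T1 * x) * Fc (γ * σ2 / (um * vm * ℓub x))
          + (pD x - J x) * Fc (γ * σ2 / (um * vm * ℓr x))) * (2 * lb * Real.exp (-2 * lb * x))) := by
    intro x hx
    have hx0 : (0:ℝ) < x := hx
    show (exponentialPDF (2 * lb)) x * ν (Prod.mk x ⁻¹' A) = _
    rw [exponentialPDF_of_nonneg hx0.le, key x hx0,
      ← ENNReal.ofReal_mul (by positivity)]
    exact congrArg ENNReal.ofReal (by rw [show -(2 * lb * x) = -2 * lb * x from by ring]; ring)
  rw [setLIntegral_congr_fun measurableSet_Ioi hptwise]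
  -- convert lintegral to Bochner integral
  have hGm : Measurable fun x : ℝ => (Real.exp (-T1 * x) * Fc (γ * σ2 / (um * vm * ℓub x))
      + (pD x - J x) * Fc (γ * σ2 / (um * vm * ℓr x))) := by
    apply Measurable.add
    · exact (by fun_prop : Measurable fun x : ℝ => Real.exp (-T1 * x)).mul
        (hFcm.comp (by fun_prop))
    · exact (hpDm.sub hJm).mul (hFcm.comp (by fun_prop))
  have hG2 : ∀ x : ℝ, 0 < x → 0 ≤ (Real.exp (-T1 * x) * Fc (γ * σ2 / (um * vm * ℓub x))
      + (pD x - J x) * Fc (γ * σ2 / (um * vm * ℓr x)))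
      ∧ (Real.exp (-T1 * x) * Fc (γ * σ2 / (um * vm * ℓub x))
      + (pD x - J x) * Fc (γ * σ2 / (um * vm * ℓr x))) ≤ 2 := by
    intro x hx
    have h1 := hFc0 _ (ht1nn x)
    have h2 := hFc1 _ (ht1nn x)
    have h3 := hFc0 _ (ht2nn x)
    have h4 := hFc1 _ (ht2nn x)
    have h5 := (hpDJ x hx).1
    have h6 := (hpDJ x hx).2
    have h7 : Real.exp (-T1 * x) ≤ 1 := Real.exp_le_one_iff.mpr (by nlinarith)
    have h8 : 0 < Real.exp (-T1 * x) := Real.exp_pos _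
    constructor <;> nlinarith
  have hexpInt : Integrable (fun x : ℝ => Real.exp (-2 * lb * x)) (volume.restrict (Ioi 0)) := by
    have h := exp_neg_integrableOn_Ioi 0 (show (0:ℝ) < 2 * lb by positivity)
    exact h.congr_fun (fun x _ => by beta_reduce; rw [show -(2 * lb) * x = -2 * lb * x from by ring])
      measurableSet_Ioi
  have hgInt : Integrable (fun x : ℝ => 2 * (2 * lb * Real.exp (-2 * lb * x)))
      (volume.restrict (Ioi 0)) := (hexpInt.const_mul (2 * lb)).const_mul 2
  have hdm : Measurable fun x : ℝ => 2 * lb * Real.exp (-2 * lb * x) := by fun_prop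
  have hInt : Integrable (fun x : ℝ => (Real.exp (-T1 * x) * Fc (γ * σ2 / (um * vm * ℓub x))
      + (pD x - J x) * Fc (γ * σ2 / (um * vm * ℓr x))) * (2 * lb * Real.exp (-2 * lb * x)))
      (volume.restrict (Ioi 0)) := by
    apply Integrable.mono hgInt ((hGm.mul hdm).aestronglyMeasurable)
    refine (ae_restrict_iff' measurableSet_Ioi).mpr (ae_of_all _ (fun x hx => ?_))
    have hx0 : (0:ℝ) < x := hx
    have hd0 : 0 ≤ 2 * lb * Real.exp (-2 * lb * x) := by positivity
    simp only [Pi.mul_apply]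
    rw [Real.norm_eq_abs, Real.norm_eq_abs,
      abs_of_nonneg (mul_nonneg (hG2 x hx0).1 hd0),
      abs_of_nonneg (by positivity)]
    exact mul_le_mul_of_nonneg_right (hG2 x hx0).2 hd0
  have hNonneg : 0 ≤ᵐ[volume.restrict (Ioi (0:ℝ))]
      fun x : ℝ => (Real.exp (-T1 * x) * Fc (γ * σ2 / (um * vm * ℓub x))
      + (pD x - J x) * Fc (γ * σ2 / (um * vm * ℓr x))) * (2 * lb * Real.exp (-2 * lb * x)) := by
    refine (ae_restrict_iff' measurableSet_Ioi).mpr (ae_of_all _ (fun x hx => ?_))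
    have hx0 : (0:ℝ) < x := hx
    exact mul_nonneg (hG2 x hx0).1 (by positivity)
  rw [← ofReal_integral_eq_lintegral_ofReal hInt hNonneg]
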